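/- Define k̃ = max over ordered pairs of distinct players (i, j) of [ c·(min{x̂_i, x̂_j} + min{ŷ_i, ŷ_j}) + t_i·max{f(x̂_j) − f(x̂_i), 0} + (1−t_i)·max{f(ŷ_j) − f(ŷ_i), 0} ]. If k ≤ k̃, then there exists an independent Nash equilibrium, i.e., a Nash equilibrium s* = (x*, y*, g*) in which no large contributor sponsors any link: g*_{ij} = 0 for all i ∈ C(g*) and all j. -/

import Mathlib

open Filter

noncomputable section

/-- `(x, y)` is an isolation demand for taste `t`: a maximizer of
`t·f(x) + (1−t)·f(y) − c·(x+y)` over nonnegative contributions. -/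
def IsIsolationDemand (f : ℝ → ℝ) (c t x y : ℝ) : Prop :=
  0 ≤ x ∧ 0 ≤ y ∧
  ∀ x' y' : ℝ, 0 ≤ x' → 0 ≤ y' →
    t * f x' + (1 - t) * f y' - c * (x' + y') ≤ t * f x + (1 - t) * f y - c * (x + y)

/-- Maintained assumptions on the benefit function `f`: twice continuously
differentiable, strictly increasing, strictly concave on `[0,∞)`, with
`lim_{z→0⁺} f′(z) > c` (possibly `+∞`, hence an `EReal` limit) and
`lim_{z→∞} f′(z) = m < c`. -/
def BenefitAssumptions (f : ℝ → ℝ) (c : ℝ) : Prop :=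
  ContDiffOn ℝ 2 f (Set.Ici 0) ∧ StrictMonoOn f (Set.Ici 0) ∧
  StrictConcaveOn ℝ (Set.Ici 0) f ∧
  (∃ L : EReal, Tendsto (fun z => Real.toEReal (deriv f z)) (nhdsWithin 0 (Set.Ioi 0)) (nhds L) ∧
    (c : EReal) < L) ∧
  (∃ m : ℝ, Tendsto (deriv f) atTop (nhds m) ∧ m < c)

/-- Spillovers of a good with contribution profile `x` received by `i`
through the links she sponsors in `g`. -/
def spill {n : ℕ} (x : Fin n → ℝ) (g : Fin n → Fin n → Bool) (i : Fin n) : ℝ :=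
  ∑ j, if g i j then x j else 0

/-- Number of links sponsored by `i` (as a real number). -/
def nlinks {n : ℕ} (g : Fin n → Fin n → Bool) (i : Fin n) : ℝ :=
  ∑ j, if g i j then (1 : ℝ) else 0

/-- Utility of player `i` under the strategy profile `(x, y, g)`. -/
def payoff {n : ℕ} (t : Fin n → ℝ) (f : ℝ → ℝ) (c k : ℝ)
    (x y : Fin n → ℝ) (g : Fin n → Fin n → Bool) (i : Fin n) : ℝ :=
  t i * f (x i + spill x g i) + (1 - t i) * f (y i + spill y g i)
    - c * (x i + y i) - nlinks g i * k

/-- Replace player `i`'s row of links by `gi`. -/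
def updLinks {n : ℕ} (g : Fin n → Fin n → Bool) (i : Fin n) (gi : Fin n → Bool) :
    Fin n → Fin n → Bool :=
  fun a b => if a = i then gi b else g a b

/-- Nash equilibrium: contributions are nonnegative, nobody links to herself,
and no player can strictly gain by simultaneously changing her own
contributions and links. -/
def NashEq {n : ℕ} (t : Fin n → ℝ) (f : ℝ → ℝ) (c k : ℝ)
    (x y : Fin n → ℝ) (g : Fin n → Fin n → Bool) : Prop :=
  (∀ i, 0 ≤ x i) ∧ (∀ i, 0 ≤ y i) ∧ (∀ i, g i i = false) ∧
  ∀ (i : Fin n) (xi yi : ℝ) (gi : Fin n → Bool), 0 ≤ xi → 0 ≤ yi → gi i = false →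
    payoff t f c k (Function.update x i xi) (Function.update y i yi) (updLinks g i gi) i
      ≤ payoff t f c k x y g i

/-- Assumptions on taste parameters: pairwise distinct, in `[0,1]`, and the
extreme types `0` and `1` are realized. -/
def TypeAssumptions {n : ℕ} (t : Fin n → ℝ) : Prop :=
  Function.Injective t ∧ (∀ i, t i ∈ Set.Icc (0:ℝ) 1) ∧ (∃ i, t i = 0) ∧ (∃ i, t i = 1)

/-- `i` is a large contributor in `g`: she receives at least one link. -/
def isContributor {n : ℕ} (g : Fin n → Fin n → Bool) (i : Fin n) : Prop :=
  ∃ j, g j i = true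

/-- `i` is isolated in `g`: she neither sponsors nor receives links. -/
def isIsolated {n : ℕ} (g : Fin n → Fin n → Bool) (i : Fin n) : Prop :=
  (∀ j, g i j = false) ∧ (∀ j, g j i = false)

/-- The gains player `i` (with taste `ti` and isolation demand `(xi, yi)`)
obtains from a single link to player `j` providing her isolation bundle
`(xj, yj)`, gross of the linking cost. -/
def linkGain (f : ℝ → ℝ) (c ti xi yi xj yj : ℝ) : ℝ :=
  c * (min xi xj + min yi yj) + ti * max (f xj - f xi) 0
    + (1 - ti) * max (f yj - f yi) 0


namespace S11


def gg (f : ℝ → ℝ) (c u d s : ℝ) : ℝ := c * min d s + u * (f (max d s) - f d)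

variable {f : ℝ → ℝ} {c : ℝ}

lemma incr (hcc : ConcaveOn ℝ (Set.Ici 0) f) {a b δ : ℝ} (ha : 0 ≤ a) (hab : a ≤ b)
    (hδ : 0 ≤ δ) : f (b + δ) - f b ≤ f (a + δ) - f a := by
  rcases eq_or_lt_of_le hδ with h | hδpos
  · simp [← h]
  rcases eq_or_lt_of_le hab with h | habs
  · simp [h]
  have hb : 0 ≤ b := le_trans ha hab
  have hD : 0 < b + δ - a := by linarith
  set lam : ℝ := δ / (b + δ - a) with hlam
  set mu : ℝ := (b - a) / (b + δ - a) with hmu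
  have hlam0 : 0 ≤ lam := div_nonneg (le_of_lt hδpos) (le_of_lt hD)
  have hmu0 : 0 ≤ mu := div_nonneg (by linarith) (le_of_lt hD)
  have hsum : lam + mu = 1 := by rw [hlam, hmu, ← add_div, show δ + (b - a) = b + δ - a by ring, div_self hD.ne']
  have hm1 : lam • (b + δ) + mu • a ∈ Set.Ici (0:ℝ) := by
    have h1 := mul_nonneg hlam0 (by linarith : (0:ℝ) ≤ b + δ)
    have h2 := mul_nonneg hmu0 ha
    simp only [smul_eq_mul, Set.mem_Ici]; linarith
  have hm2 : mu • (b + δ) + lam • a ∈ Set.Ici (0:ℝ) := by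
    have h1 := mul_nonneg hmu0 (by linarith : (0:ℝ) ≤ b + δ)
    have h2 := mul_nonneg hlam0 ha
    simp only [smul_eq_mul, Set.mem_Ici]; linarith
  have h1 : f (lam • (b + δ) + mu • a) ≥ lam • f (b + δ) + mu • f a :=
    hcc.2 (Set.mem_Ici.2 (by linarith)) (Set.mem_Ici.2 ha) hlam0 hmu0 hsum
  have h2 : f (mu • (b + δ) + lam • a) ≥ mu • f (b + δ) + lam • f a :=
    hcc.2 (Set.mem_Ici.2 (by linarith)) (Set.mem_Ici.2 ha) hmu0 hlam0 (by linarith)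
  have e1 : lam • (b + δ) + mu • a = a + δ := by
    simp only [smul_eq_mul, hlam, hmu]; field_simp; ring
  have e2 : mu • (b + δ) + lam • a = b := by
    simp only [smul_eq_mul, hlam, hmu]; field_simp; ring
  rw [e1] at h1; rw [e2] at h2
  simp only [smul_eq_mul] at h1 h2
  have h3 : lam * f (b + δ) + mu * f a + (mu * f (b + δ) + lam * f a)
      = (lam + mu) * (f (b + δ) + f a) := by ring
  rw [hsum, one_mul] at h3
  linarith


lemma rev {u d : ℝ} (hopt : ∀ X, 0 ≤ X → u * f X - c * X ≤ u * f d - c * d)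
    {X : ℝ} (hX : 0 ≤ X) : u * (f X - f d) ≤ c * (X - d) := by
  have := hopt X hX; nlinarith [this]

lemma gg_zero {u d : ℝ} (hd : 0 ≤ d) : gg f c u d 0 = 0 := by
  simp [gg, min_eq_right hd, max_eq_left hd]

lemma gg_lin {u d s : ℝ} (hsd : s ≤ d) : gg f c u d s = c * s := by
  simp [gg, min_eq_right hsd, max_eq_left hsd]

lemma gg_hi {u d s : ℝ} (hds : d ≤ s) : gg f c u d s = c * d + u * (f s - f d) := by
  simp [gg, min_eq_left hds, max_eq_right hds]

lemma gg_mono (hm : ∀ a b : ℝ, 0 ≤ a → a ≤ b → f a ≤ f b) (hc : 0 < c)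
    {u d s s' : ℝ} (hu : 0 ≤ u) (hd : 0 ≤ d) (hs : 0 ≤ s) (hss : s ≤ s') :
    gg f c u d s ≤ gg f c u d s' := by
  have h1 : c * min d s ≤ c * min d s' :=
    mul_le_mul_of_nonneg_left (by rcases le_total d s with h|h <;> rcases le_total d s' with h'|h' <;> simp [min_eq_left, min_eq_right, *] <;> linarith) hc.le
  have h2 : f (max d s) ≤ f (max d s') :=
    hm _ _ (le_trans hd (le_max_left _ _)) (max_le_max le_rfl hss)
  have h3 : u * (f (max d s) - f d) ≤ u * (f (max d s') - f d) := by
    apply mul_le_mul_of_nonneg_left _ hu; linarith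
  unfold gg; linarith

lemma gg_le (hc : 0 < c) {u d s : ℝ}
    (hopt : ∀ X, 0 ≤ X → u * f X - c * X ≤ u * f d - c * d)
    (hs : 0 ≤ s) : gg f c u d s ≤ c * s := by
  rcases le_total s d with h | h
  · rw [gg_lin h]
  · rw [gg_hi h]
    have := rev hopt hs
    linarith

lemma gg_nonneg (hm : ∀ a b : ℝ, 0 ≤ a → a ≤ b → f a ≤ f b) (hc : 0 < c)
    {u d s : ℝ} (hu : 0 ≤ u) (hd : 0 ≤ d) (hs : 0 ≤ s) : 0 ≤ gg f c u d s := by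
  have h1 : 0 ≤ min d s := le_min hd hs
  have h2 : f d ≤ f (max d s) := hm _ _ hd (le_max_left _ _)
  have := mul_nonneg hc.le h1
  have := mul_nonneg hu (by linarith : (0:ℝ) ≤ f (max d s) - f d)
  unfold gg; linarith

lemma gg_subadd (hcc : ConcaveOn ℝ (Set.Ici 0) f) (hc : 0 < c)
    {u d s s' : ℝ} (hu : 0 ≤ u) (hd : 0 ≤ d)
    (hopt : ∀ X, 0 ≤ X → u * f X - c * X ≤ u * f d - c * d)
    (hs : 0 ≤ s) (hs' : 0 ≤ s') :
    gg f c u d (s + s') ≤ gg f c u d s + gg f c u d s' := by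
  have key : ∀ a b : ℝ, 0 ≤ a → 0 ≤ b → a ≤ d → d ≤ b →
      u * (f (b + a) - f b) ≤ c * a := by
    intro a b ha hb had hdb
    have h1 : f (b + a) - f b ≤ f (d + a) - f d := incr hcc hd hdb ha
    have h2 : u * (f (d + a) - f d) ≤ c * a := by
      have := rev hopt (by linarith : (0:ℝ) ≤ d + a)
      have h3 : c * (d + a - d) = c * a := by ring
      linarith [this, h3.le]
    calc u * (f (b + a) - f b) ≤ u * (f (d + a) - f d) :=
          mul_le_mul_of_nonneg_left (by linarith) hu
      _ ≤ c * a := h2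
  have key2 : ∀ a b : ℝ, 0 ≤ a → 0 ≤ b → d ≤ a → d ≤ b →
      u * (f (b + a) - f b) ≤ c * d + u * (f a - f d) := by
    intro a b ha hb hda hdb
    have h1 : f (b + a) - f b ≤ f (d + a) - f d := incr hcc hd hdb ha
    have h2 : u * (f (d + a) - f (a)) ≤ c * d := by
      have h3 : f (d + a) - f a = f (a + d) - f a := by ring_nf
      have h4 : f (a + d) - f a ≤ f (d + d) - f d := incr hcc hd hda hd
      have h5 : u * (f (d + d) - f d) ≤ c * d := by
        have := rev hopt (by linarith : (0:ℝ) ≤ d + d)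
        have h6 : c * (d + d - d) = c * d := by ring
        linarith [this, h6.le]
      calc u * (f (d + a) - f a) ≤ u * (f (d + d) - f d) := by
            apply mul_le_mul_of_nonneg_left _ hu; linarith
        _ ≤ c * d := h5
    have h7 : u * (f (b + a) - f b) ≤ u * (f (d + a) - f d) :=
      mul_le_mul_of_nonneg_left (by linarith) hu
    have h8 : u * (f (d + a) - f d) = u * (f (d + a) - f a) + u * (f a - f d) := by ring
    linarith
  rcases le_total (s + s') d with hC | hC
  · rw [gg_lin hC, gg_lin (by linarith : s ≤ d), gg_lin (by linarith : s' ≤ d)]; ring_nf; rfl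
  · rw [gg_hi hC]
    rcases le_total s d with h1 | h1 <;> rcases le_total s' d with h2 | h2
    · -- both below d
      rw [gg_lin h1, gg_lin h2]
      have := rev hopt (by linarith : (0:ℝ) ≤ s + s')
      linarith
    · -- s ≤ d ≤ s'
      rw [gg_lin h1, gg_hi h2]
      have hk := key s s' hs hs' h1 h2
      have he : f (s' + s) = f (s + s') := by ring_nf
      rw [he] at hk
      nlinarith [hk]
    · -- s' ≤ d ≤ s
      rw [gg_hi h1, gg_lin h2]
      have := key s' s hs' hs h2 h1
      linarith
    · -- both above d
      rw [gg_hi h1, gg_hi h2]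
      have hk := key2 s s' hs hs' h1 h2
      have he : f (s' + s) = f (s + s') := by ring_nf
      rw [he] at hk
      nlinarith [hk]

/-- upper bound on any own-contribution response to spill `s` -/
lemma gg_best (hcc : ConcaveOn ℝ (Set.Ici 0) f) {u d s w : ℝ} (hu : 0 ≤ u) (hd : 0 ≤ d)
    (hopt : ∀ X, 0 ≤ X → u * f X - c * X ≤ u * f d - c * d)
    (hs : 0 ≤ s) (hw : 0 ≤ w) :
    u * f (w + s) - c * w ≤ (u * f d - c * d) + gg f c u d s := by
  rcases le_total s d with h | h
  · rw [gg_lin h]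
    have := hopt (w + s) (by linarith)
    linarith
  · rw [gg_hi h]
    have h1 : f (s + w) - f s ≤ f (d + w) - f d := incr hcc hd h hw
    have h2 : u * (f (d + w) - f d) ≤ c * w := by
      have := rev hopt (by linarith : (0:ℝ) ≤ d + w)
      have h3 : c * (d + w - d) = c * w := by ring
      linarith [this, h3.le]
    have h4 : u * (f (s + w) - f s) ≤ c * w := by
      calc u * (f (s + w) - f s) ≤ u * (f (d + w) - f d) :=
            mul_le_mul_of_nonneg_left (by linarith) hu
        _ ≤ c * w := h2
    have he : f (w + s) = f (s + w) := by ring_nf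
    rw [he]
    nlinarith [h4]

/-- exact payoff at the residual best response -/
lemma gg_eq {u d s : ℝ} (hs : 0 ≤ s) :
    u * f (max (d - s) 0 + s) - c * max (d - s) 0 = (u * f d - c * d) + gg f c u d s := by
  rcases le_total s d with h | h
  · rw [gg_lin h, max_eq_left (by linarith : 0 ≤ d - s)]
    have he : d - s + s = d := by ring
    rw [he]; ring
  · rw [gg_hi h, max_eq_right (by linarith : d - s ≤ 0)]
    have he : (0:ℝ) + s = s := by ring
    rw [he]; ring

/-- interval property core: larger weight & demand gains more from a big target -/
lemma gg_I (hm : ∀ a b : ℝ, 0 ≤ a → a ≤ b → f a ≤ f b)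
    {u v du dv s : ℝ} (huv : u ≤ v) (hdu : 0 ≤ du) (hdv : 0 ≤ dv)
    (hoptu : ∀ X, 0 ≤ X → u * f X - c * X ≤ u * f du - c * du)
    (hduv : du ≤ dv) (hs : dv ≤ s) :
    gg f c u du s ≤ gg f c v dv s := by
  rw [gg_hi (le_trans hduv hs), gg_hi hs]
  have h1 : u * f dv - c * dv ≤ u * f du - c * du := hoptu dv hdv
  have h2 : (v - u) * (f s - f dv) ≥ 0 :=
    mul_nonneg (by linarith) (by have := hm dv s hdv hs; linarith)
  nlinarith [h1, h2]


lemma gg_sum_le {f : ℝ → ℝ} {c : ℝ} (hcc : ConcaveOn ℝ (Set.Ici 0) f) (hc : 0 < c)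
    {u d : ℝ} (hu : 0 ≤ u) (hd : 0 ≤ d)
    (hopt : ∀ X, 0 ≤ X → u * f X - c * X ≤ u * f d - c * d)
    {β : Type*} (T : Finset β) (w : β → ℝ) (hw : ∀ j ∈ T, 0 ≤ w j) :
    gg f c u d (∑ j ∈ T, w j) ≤ ∑ j ∈ T, gg f c u d (w j) := by
  classical
  induction T using Finset.induction_on with
  | empty => simp [gg_zero hd]
  | @insert a s hnotmem ih =>

    rw [Finset.sum_insert hnotmem, Finset.sum_insert hnotmem]
    have hwa : 0 ≤ w a := hw a (Finset.mem_insert_self _ _)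
    have hws : ∀ j ∈ s, 0 ≤ w j := fun j hj => hw j (Finset.mem_insert_of_mem hj)
    have hsum : 0 ≤ ∑ j ∈ s, w j := Finset.sum_nonneg hws
    calc gg f c u d (w a + ∑ j ∈ s, w j)
        ≤ gg f c u d (w a) + gg f c u d (∑ j ∈ s, w j) := gg_subadd hcc hc hu hd hopt hwa hsum
      _ ≤ gg f c u d (w a) + ∑ j ∈ s, gg f c u d (w j) := by linarith [ih hws]


/-- Abstract kernel lemma for digraphs with the interval property. -/
lemma kernel_aux {α : Type*} [DecidableEq α] (τ : α → ℝ) (γ : α → α → ℝ) (k : ℝ)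
    (hinj : ∀ a b : α, τ a = τ b → a = b)
    (Idown : ∀ a b p : α, τ a < τ b → τ b < τ p → γ p a ≤ γ b a)
    (Iup : ∀ a b p : α, τ a < τ b → τ b < τ p → γ a p ≤ γ b p) :
    ∀ (N : ℕ) (V : Finset α), V.card ≤ N →
      ∃ F : Finset α, F ⊆ V ∧ (∀ i ∈ F, ∀ j ∈ F, i ≠ j → γ i j ≤ k) ∧
        (∀ p ∈ V, p ∉ F → ∃ j ∈ F, k ≤ γ p j) := by
  intro N
  induction N with
  | zero =>
    intro V hV
    have : V = ∅ := Finset.card_eq_zero.1 (Nat.le_zero.1 hV)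
    subst this
    exact ⟨∅, Finset.Subset.refl _, by simp, by simp⟩
  | succ N ih =>
    intro V hV
    rcases V.eq_empty_or_nonempty with rfl | hne
    · exact ⟨∅, Finset.Subset.refl _, by simp, by simp⟩
    obtain ⟨v, hvV, hvmin⟩ := V.exists_min_image τ hne
    -- strictly minimal type
    have hvmin' : ∀ b ∈ V, b ≠ v → τ v < τ b := by
      intro b hb hbv
      rcases lt_or_eq_of_le (hvmin b hb) with h | h
      · exact h
      · exact absurd (hinj _ _ h.symm) hbv
    set T : Finset α := V.filter (fun q => q ≠ v ∧ k ≤ γ q v) with hT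
    set V' : Finset α := V \ insert v T with hV'
    have hV'sub : V' ⊆ V.erase v := by
      intro x hx
      rw [hV', Finset.mem_sdiff] at hx
      exact Finset.mem_erase.2 ⟨fun h => hx.2 (by simp [h]), hx.1⟩
    have hV'card : V'.card ≤ N := by
      have h1 := Finset.card_le_card hV'sub
      have h2 := Finset.card_erase_of_mem hvV
      omega
    obtain ⟨F', hF'sub, hC1, hC2⟩ := ih V' hV'card
    have hF'V : F' ⊆ V := fun x hx => (Finset.mem_sdiff.1 (hF'sub hx)).1
    have hvF' : v ∉ F' := fun h => (Finset.mem_erase.1 (hV'sub (hF'sub h))).1 rfl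
    have hcover : ∀ p ∈ V, p ≠ v → p ∉ T → p ∈ V' := by
      intro p hp hpv hpT
      rw [hV', Finset.mem_sdiff]
      exact ⟨hp, fun h => by rcases Finset.mem_insert.1 h with h | h; exact hpv h; exact hpT h⟩
    have hTnotV' : ∀ p ∈ T, p ∉ V' := by
      intro p hp h
      exact (Finset.mem_sdiff.1 h).2 (Finset.mem_insert_of_mem hp)
    by_cases hcase : ∃ f ∈ F', k < γ v f
    · obtain ⟨f₀, hf₀F, hf₀k⟩ := hcase
      refine ⟨F', fun x hx => hF'V hx, hC1, ?_⟩
      intro p hpV hpF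
      by_cases hpv : p = v
      · exact ⟨f₀, hf₀F, by rw [hpv]; exact hf₀k.le⟩
      by_cases hpT : p ∈ T
      · -- p is tempted by v ; transfer to f₀
        have hpTm := (Finset.mem_filter.1 hpT).2
        have hτvp : τ v < τ p := hvmin' p hpV hpv
        have hf₀V' : f₀ ∈ V' := hF'sub hf₀F
        have hf₀v : f₀ ≠ v := (Finset.mem_erase.1 (hV'sub hf₀V')).1
        have hτvf : τ v < τ f₀ := hvmin' f₀ (hF'V hf₀F) hf₀v
        have hpf : p ≠ f₀ := fun h => hTnotV' p hpT (h ▸ hf₀V')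
        rcases lt_trichotomy (τ p) (τ f₀) with h | h | h
        · exact ⟨f₀, hf₀F, le_trans hf₀k.le (Iup v p f₀ hτvp h)⟩
        · exact absurd (hinj _ _ h) hpf
        · -- τ f₀ < τ p : then f₀ would be in T, contradiction
          exfalso
          have := Idown v f₀ p hτvf h
          have hf₀T : f₀ ∈ T := by
            rw [hT, Finset.mem_filter]
            exact ⟨hF'V hf₀F, hf₀v, le_trans hpTm.2 this⟩
          exact hTnotV' f₀ hf₀T hf₀V'
      · exact hC2 p (hcover p hpV hpv hpT) hpF
    · push_neg at hcase
      refine ⟨insert v F', ?_, ?_, ?_⟩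
      · intro x hx
        rcases Finset.mem_insert.1 hx with rfl | hx
        · exact hvV
        · exact hF'V hx
      · intro i hi j hj hij
        rcases Finset.mem_insert.1 hi with hiv | hiF
        · rcases Finset.mem_insert.1 hj with hjv | hjF
          · exact absurd (hiv.trans hjv.symm) hij
          · rw [hiv]; exact hcase j hjF
        · rcases Finset.mem_insert.1 hj with hjv | hjF
          · have hiV' := hF'sub hiF
            have hiT : i ∉ T := fun h => hTnotV' i h hiV'
            have hivne : i ≠ v := (Finset.mem_erase.1 (hV'sub hiV')).1
            rw [hjv]
            by_contra hcon
            exact hiT (by rw [hT, Finset.mem_filter]; exact ⟨hF'V hiF, hivne, le_of_not_ge hcon⟩)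
          · exact hC1 i hiF j hjF hij
      · intro p hpV hpF
        have hpv : p ≠ v := fun h => hpF (by rw [h]; exact Finset.mem_insert_self _ _)
        by_cases hpT : p ∈ T
        · exact ⟨v, Finset.mem_insert_self _ _, (Finset.mem_filter.1 hpT).2.2⟩
        · obtain ⟨j, hjF, hjk⟩ := hC2 p (hcover p hpV hpv hpT)
            (fun h => hpF (Finset.mem_insert_of_mem h))
          exact ⟨j, Finset.mem_insert_of_mem hjF, hjk⟩

end S11

theorem statement11 {n : ℕ} (hn : 3 ≤ n)
    (t : Fin n → ℝ) (hT : TypeAssumptions t)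
    (f : ℝ → ℝ) (c k : ℝ) (hc : 0 < c) (hk : 0 < k)
    (hB : BenefitAssumptions f c)
    (xhat yhat : Fin n → ℝ)
    (hdem : ∀ i, IsIsolationDemand f c (t i) (xhat i) (yhat i))
    (ktilde : ℝ)
    (hub : ∀ i j : Fin n, i ≠ j →
      linkGain f c (t i) (xhat i) (yhat i) (xhat j) (yhat j) ≤ ktilde)
    (hatt : ∃ i j : Fin n, i ≠ j ∧
      linkGain f c (t i) (xhat i) (yhat i) (xhat j) (yhat j) = ktilde)
    (hkk : k ≤ ktilde) :
    ∃ (x y : Fin n → ℝ) (g : Fin n → Fin n → Bool),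
      NashEq t f c k x y g ∧
      ∀ i, isContributor g i → ∀ j, g i j = false := by
  classical
  obtain ⟨hinj, hrange, ⟨B, hB0⟩, ⟨A, hA1⟩⟩ := hT
  obtain ⟨hCD, hSM, hSC, -, -⟩ := hB
  have hcc : ConcaveOn ℝ (Set.Ici 0) f := hSC.concaveOn
  have hm : ∀ a b : ℝ, 0 ≤ a → a ≤ b → f a ≤ f b := by
    intro a b ha hab
    rcases eq_or_lt_of_le hab with rfl | h
    · exact le_rfl
    · exact (hSM (Set.mem_Ici.2 ha) (Set.mem_Ici.2 (le_trans ha hab)) h).le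
  have hx0 : ∀ i, 0 ≤ xhat i := fun i => (hdem i).1
  have hy0 : ∀ i, 0 ≤ yhat i := fun i => (hdem i).2.1
  have ht0 : ∀ i, 0 ≤ t i := fun i => (hrange i).1
  have ht1 : ∀ i, t i ≤ 1 := fun i => (hrange i).2
  have ht0' : ∀ i, 0 ≤ 1 - t i := fun i => by linarith [ht1 i]
  have htinj : ∀ i j : Fin n, t i = t j → i = j := fun i j h => hinj h
  have hoptx : ∀ i, ∀ X, 0 ≤ X →
      t i * f X - c * X ≤ t i * f (xhat i) - c * (xhat i) := by
    intro i X hX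
    have := (hdem i).2.2 X (yhat i) hX (hy0 i)
    linarith
  have hopty : ∀ i, ∀ Y, 0 ≤ Y →
      (1 - t i) * f Y - c * Y ≤ (1 - t i) * f (yhat i) - c * (yhat i) := by
    intro i Y hY
    have := (hdem i).2.2 (xhat i) Y (hx0 i) hY
    linarith
  -- comonotonicity of demands
  have comox : ∀ i j : Fin n, t i ≤ t j → xhat i ≤ xhat j := by
    intro i j hij
    rcases eq_or_lt_of_le hij with heq | hlt
    · rw [htinj i j heq]
    by_contra hcon
    push_neg at hcon
    have h1 := hoptx i (xhat j) (hx0 j)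
    have h2 := hoptx j (xhat i) (hx0 i)
    have hf : f (xhat j) < f (xhat i) :=
      hSM (Set.mem_Ici.2 (hx0 j)) (Set.mem_Ici.2 (hx0 i)) hcon
    nlinarith [mul_pos (sub_pos.2 hlt) (sub_pos.2 hf)]
  have comoy : ∀ i j : Fin n, t i ≤ t j → yhat j ≤ yhat i := by
    intro i j hij
    rcases eq_or_lt_of_le hij with heq | hlt
    · rw [htinj i j heq]
    by_contra hcon
    push_neg at hcon
    have h1 := hopty i (yhat j) (hy0 j)
    have h2 := hopty j (yhat i) (hy0 i)
    have hf : f (yhat i) < f (yhat j) :=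
      hSM (Set.mem_Ici.2 (hy0 i)) (Set.mem_Ici.2 (hy0 j)) hcon
    nlinarith [mul_pos (sub_pos.2 hlt) (sub_pos.2 hf)]
  have hAB : A ≠ B := by
    intro h; rw [h, hB0] at hA1; norm_num at hA1
  have hyA : yhat A = 0 := by
    have h := (hdem A).2.2 (xhat A) 0 (hx0 A) le_rfl
    rw [hA1] at h
    have := hy0 A
    nlinarith [h]
  have hxB : xhat B = 0 := by
    have h := (hdem B).2.2 0 (yhat B) le_rfl (hy0 B)
    rw [hB0] at h
    have := hx0 B
    nlinarith [h]
  have hxbar : ∀ i, xhat i ≤ xhat A := fun i => comox i A (by rw [hA1]; exact ht1 i)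
  have hybar : ∀ i, yhat i ≤ yhat B := fun i => comoy B i (by rw [hB0]; exact ht0 i)
  -- pairwise link gains
  set G : Fin n → Fin n → ℝ := fun i j =>
    S11.gg f c (t i) (xhat i) (xhat j) + S11.gg f c (1 - t i) (yhat i) (yhat j) with hGdef
  have hGAj : ∀ j, G A j = c * xhat j := by
    intro j
    rw [hGdef]
    simp only
    rw [S11.gg_lin (hxbar j), hyA, hA1]
    have h0 : min (0:ℝ) (yhat j) = 0 := min_eq_left (hy0 j)
    rw [S11.gg, h0]
    ring
  have hGBj : ∀ j, G B j = c * yhat j := by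
    intro j
    rw [hGdef]
    simp only
    rw [S11.gg_lin (hybar j), hxB, hB0]
    have h0 : min (0:ℝ) (xhat j) = 0 := min_eq_left (hx0 j)
    rw [S11.gg, h0]
    ring
  have hGjA : ∀ j, c * xhat j ≤ G j A := by
    intro j
    rw [hGdef]
    simp only
    rw [hyA, S11.gg_zero (hy0 j), S11.gg_hi (hxbar j)]
    have h1 : f (xhat j) ≤ f (xhat A) := hm _ _ (hx0 j) (hxbar j)
    have h2 : 0 ≤ t j * (f (xhat A) - f (xhat j)) := mul_nonneg (ht0 j) (by linarith)
    linarith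
  have hGjB : ∀ j, c * yhat j ≤ G j B := by
    intro j
    rw [hGdef]
    simp only
    rw [hxB, S11.gg_zero (hx0 j), S11.gg_hi (hybar j)]
    have h1 : f (yhat j) ≤ f (yhat B) := hm _ _ (hy0 j) (hybar j)
    have h2 : 0 ≤ (1 - t j) * (f (yhat B) - f (yhat j)) := mul_nonneg (ht0' j) (by linarith)
    linarith
  -- interval properties
  have IdownG : ∀ a b p : Fin n, t a < t b → t b < t p → G p a ≤ G b a := by
    intro a b p hab hbp
    rw [hGdef]
    simp only
    have h1 : xhat a ≤ xhat p := comox a p (by linarith)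
    have h2 : xhat a ≤ xhat b := comox a b hab.le
    rw [S11.gg_lin h1, S11.gg_lin h2]
    have h3 : S11.gg f c (1 - t p) (yhat p) (yhat a) ≤ S11.gg f c (1 - t b) (yhat b) (yhat a) :=
      S11.gg_I hm (by linarith) (hy0 p) (hy0 b) (hopty p) (comoy b p hbp.le) (comoy a b hab.le)
    linarith
  have IupG : ∀ a b p : Fin n, t a < t b → t b < t p → G a p ≤ G b p := by
    intro a b p hab hbp
    rw [hGdef]
    simp only
    have h1 : yhat p ≤ yhat a := comoy a p (by linarith)
    have h2 : yhat p ≤ yhat b := comoy b p hbp.le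
    rw [S11.gg_lin h1, S11.gg_lin h2]
    have h3 : S11.gg f c (t a) (xhat a) (xhat p) ≤ S11.gg f c (t b) (xhat b) (xhat p) :=
      S11.gg_I hm hab.le (hx0 a) (hx0 b) (hoptx a) (comox a b hab.le) (comox b p hbp.le)
    linarith
  -- the kernel of secondary players
  set Sec : Finset (Fin n) :=
    Finset.univ.filter (fun i => i ≠ A ∧ i ≠ B ∧ G i A < k ∧ G i B < k) with hSecdef
  obtain ⟨F, hFSec, hker1, hker2⟩ :=
    S11.kernel_aux t G k htinj IdownG IupG Sec.card Sec le_rfl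
  set Fulls : Finset (Fin n) := insert A (insert B F) with hFullsdef
  have hAF : A ∈ Fulls := Finset.mem_insert_self _ _
  have hBF : B ∈ Fulls := Finset.mem_insert_of_mem (Finset.mem_insert_self _ _)
  have hFFulls : F ⊆ Fulls := fun x hx =>
    Finset.mem_insert_of_mem (Finset.mem_insert_of_mem hx)
  have hFsec : ∀ j ∈ F, j ≠ A ∧ j ≠ B ∧ G j A < k ∧ G j B < k := by
    intro j hj
    have := hFSec hj
    rw [hSecdef, Finset.mem_filter] at this
    exact this.2
  have hFullmem : ∀ j ∈ Fulls, j = A ∨ j = B ∨ j ∈ F := by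
    intro j hj
    rcases Finset.mem_insert.1 hj with h | h
    · exact Or.inl h
    rcases Finset.mem_insert.1 h with h' | h'
    · exact Or.inr (Or.inl h')
    · exact Or.inr (Or.inr h')
  -- C1 : no full player is tempted by another full player
  have hC1 : ∀ i ∈ Fulls, ∀ j ∈ Fulls, i ≠ j → G i j ≤ k := by
    intro i hi j hj hij
    rcases hFullmem i hi with rfl | rfl | hiF
    · rcases hFullmem j hj with rfl | rfl | hjF
      · exact absurd rfl hij
      · calc G i j = c * xhat j := hGAj j
          _ = 0 := by rw [hxB]; ring
          _ ≤ k := hk.le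
      · calc G i j = c * xhat j := hGAj j
          _ ≤ G j i := hGjA j
          _ ≤ k := (hFsec j hjF).2.2.1.le
    · rcases hFullmem j hj with rfl | rfl | hjF
      · calc G i j = c * yhat j := hGBj j
          _ = 0 := by rw [hyA]; ring
          _ ≤ k := hk.le
      · exact absurd rfl hij
      · calc G i j = c * yhat j := hGBj j
          _ ≤ G j i := hGjB j
          _ ≤ k := (hFsec j hjF).2.2.2.le
    · rcases hFullmem j hj with rfl | rfl | hjF
      · exact (hFsec i hiF).2.2.1.le
      · exact (hFsec i hiF).2.2.2.le
      · exact hker1 i hiF j hjF hij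
  -- C2 : every non-full player has a profitable single link into Fulls
  have hC2 : ∀ p : Fin n, p ∉ Fulls → ∃ j, j ∈ Fulls ∧ j ≠ p ∧ k ≤ G p j := by
    intro p hp
    have hpA : p ≠ A := fun h => hp (h ▸ hAF)
    have hpB : p ≠ B := fun h => hp (h ▸ hBF)
    have hpF : p ∉ F := fun h => hp (hFFulls h)
    by_cases hps : p ∈ Sec
    · obtain ⟨j, hjF, hjk⟩ := hker2 p hps hpF
      exact ⟨j, hFFulls hjF, fun h => hpF (h ▸ hjF), hjk⟩
    · have hps' : ¬(p ≠ A ∧ p ≠ B ∧ G p A < k ∧ G p B < k) := by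
        intro hcon
        exact hps (by rw [hSecdef, Finset.mem_filter]; exact ⟨Finset.mem_univ p, hcon⟩)
      rcases le_or_gt k (G p A) with h | h
      · exact ⟨A, hAF, fun h' => hpA h'.symm, h⟩
      · rcases le_or_gt k (G p B) with h2 | h2
        · exact ⟨B, hBF, fun h' => hpB h'.symm, h2⟩
        · exact absurd ⟨hpA, hpB, h, h2⟩ hps'
  -- deviation values over sets of targets
  set H : Fin n → Finset (Fin n) → ℝ := fun p T =>
    S11.gg f c (t p) (xhat p) (∑ j ∈ T, xhat j) +
      S11.gg f c (1 - t p) (yhat p) (∑ j ∈ T, yhat j) - T.card * k with hHdef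
  have hHempty : ∀ p, H p ∅ = 0 := by
    intro p
    rw [hHdef]
    simp only [Finset.sum_empty, Finset.card_empty, Nat.cast_zero]
    rw [S11.gg_zero (hx0 p), S11.gg_zero (hy0 p)]
    ring
  have hσex : ∀ p : Fin n, ∃ T : Finset (Fin n),
      T ⊆ Fulls.erase p ∧ (p ∈ Fulls → T = ∅) ∧
      (p ∉ Fulls → T.Nonempty ∧ 0 ≤ H p T ∧ ∀ T' ⊆ Fulls.erase p, H p T' ≤ H p T) := by
    intro p
    by_cases hp : p ∈ Fulls
    · exact ⟨∅, Finset.empty_subset _, fun _ => rfl, fun h => absurd hp h⟩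
    · obtain ⟨j₀, hj₀F, hj₀p, hj₀k⟩ := hC2 p hp
      have hj₀mem : j₀ ∈ Fulls.erase p := Finset.mem_erase.2 ⟨hj₀p, hj₀F⟩
      obtain ⟨Tm, hTmP, hTmax⟩ :=
        Finset.exists_max_image ((Fulls.erase p).powerset) (H p) ⟨∅, Finset.empty_mem_powerset _⟩
      have hmax : ∀ T' ⊆ Fulls.erase p, H p T' ≤ H p Tm :=
        fun T' hT' => hTmax T' (Finset.mem_powerset.2 hT')
      have hsing : H p {j₀} = G p j₀ - k := by
        rw [hHdef, hGdef]
        simp only [Finset.sum_singleton, Finset.card_singleton, Nat.cast_one]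
        ring
      by_cases hpos : 0 < H p Tm
      · refine ⟨Tm, Finset.mem_powerset.1 hTmP, fun h => absurd h hp, fun _ => ⟨?_, hpos.le, hmax⟩⟩
        rcases Tm.eq_empty_or_nonempty with rfl | h
        · rw [hHempty] at hpos; exact absurd hpos (lt_irrefl 0)
        · exact h
      · push_neg at hpos
        have h1 : 0 ≤ H p {j₀} := by rw [hsing]; linarith
        have hsm : {j₀} ⊆ Fulls.erase p := Finset.singleton_subset_iff.2 hj₀mem
        exact ⟨{j₀}, hsm, fun h => absurd h hp,
          fun _ => ⟨Finset.singleton_nonempty _, h1,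
            fun T' hT' => le_trans (hmax T' hT') (by linarith [hmax {j₀} hsm])⟩⟩
  choose σ hσsub hσfull hσsrc using hσex
  -- the strategy profile
  set XX : Fin n → ℝ := fun p => ∑ j ∈ σ p, xhat j with hXXdef
  set YY : Fin n → ℝ := fun p => ∑ j ∈ σ p, yhat j with hYYdef
  set xc : Fin n → ℝ := fun i => max (xhat i - XX i) 0 with hxcdef
  set yc : Fin n → ℝ := fun i => max (yhat i - YY i) 0 with hycdef
  set g : Fin n → Fin n → Bool := fun i j => decide (j ∈ σ i) with hgdef
  have hXX0 : ∀ p, 0 ≤ XX p := fun p => Finset.sum_nonneg (fun j _ => hx0 j)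
  have hYY0 : ∀ p, 0 ≤ YY p := fun p => Finset.sum_nonneg (fun j _ => hy0 j)
  have hxc0 : ∀ i, 0 ≤ xc i := fun i => le_max_right _ _
  have hyc0 : ∀ i, 0 ≤ yc i := fun i => le_max_right _ _
  have hσFulls : ∀ i, σ i ⊆ Fulls := fun i => (hσsub i).trans (Finset.erase_subset _ _)
  have hnotmemσ : ∀ i, i ∉ σ i := fun i h => (Finset.mem_erase.1 (hσsub i h)).1 rfl
  have hxcfull : ∀ i ∈ Fulls, xc i = xhat i := by
    intro i hi
    have hXXi : XX i = 0 := by rw [hXXdef]; simp [hσfull i hi]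
    rw [hxcdef]
    simp only [hXXi, sub_zero]
    exact max_eq_left (hx0 i)
  have hycfull : ∀ i ∈ Fulls, yc i = yhat i := by
    intro i hi
    have hYYi : YY i = 0 := by rw [hYYdef]; simp [hσfull i hi]
    rw [hycdef]
    simp only [hYYi, sub_zero]
    exact max_eq_left (hy0 i)
  -- generic spill computation
  have hspill : ∀ (w : Fin n → ℝ) (g' : Fin n → Fin n → Bool) (i : Fin n),
      spill w g' i = ∑ j ∈ Finset.univ.filter (fun j => g' i j = true), w j := by
    intro w g' i
    rw [spill, Finset.sum_filter]
  have hnlinks : ∀ (g' : Fin n → Fin n → Bool) (i : Fin n),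
      nlinks g' i = (Finset.univ.filter (fun j => g' i j = true)).card := by
    intro g' i
    rw [nlinks, ← Finset.sum_filter, Finset.sum_const, nsmul_eq_mul, mul_one]
  have hgfilter : ∀ i, Finset.univ.filter (fun j => g i j = true) = σ i := by
    intro i
    ext j
    simp [hgdef]
  -- payoff of the candidate profile
  have hpay : ∀ i : Fin n, payoff t f c k xc yc g i =
      (t i * f (xhat i) + (1 - t i) * f (yhat i) - c * (xhat i + yhat i))
      + (S11.gg f c (t i) (xhat i) (XX i) + S11.gg f c (1 - t i) (yhat i) (YY i)
         - (σ i).card * k) := by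
    intro i
    have hsx : spill xc g i = XX i := by
      rw [hspill, hgfilter, hXXdef]
      exact Finset.sum_congr rfl (fun j hj => hxcfull j (hσFulls i hj))
    have hsy : spill yc g i = YY i := by
      rw [hspill, hgfilter, hYYdef]
      exact Finset.sum_congr rfl (fun j hj => hycfull j (hσFulls i hj))
    have hnl : nlinks g i = (σ i).card := by rw [hnlinks, hgfilter]
    have e1 := S11.gg_eq (f := f) (c := c) (u := t i) (d := xhat i) (hXX0 i)
    have e2 := S11.gg_eq (f := f) (c := c) (u := 1 - t i) (d := yhat i) (hYY0 i)
    rw [payoff, hsx, hsy, hnl]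
    have hxci : xc i = max (xhat i - XX i) 0 := by rw [hxcdef]
    have hyci : yc i = max (yhat i - YY i) 0 := by rw [hycdef]
    rw [hxci, hyci]
    linarith [e1, e2]
  have hXXq : ∀ p, ∑ j ∈ σ p, xhat j = XX p := fun p => by rw [hXXdef]
  have hYYq : ∀ p, ∑ j ∈ σ p, yhat j = YY p := fun p => by rw [hYYdef]
  -- the residual contribution of any linked player is an unattractive target
  have hpkg : ∀ q, q ∉ Fulls → ∀ i : Fin n,
      S11.gg f c (t i) (xhat i) (xc q) + S11.gg f c (1 - t i) (yhat i) (yc q) ≤ k := by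
    intro q hq i
    obtain ⟨hne, hH0, hmaxq⟩ := hσsrc q hq
    obtain ⟨j₀, hj₀⟩ := hne
    have hj₀q : j₀ ≠ q := (Finset.mem_erase.1 (hσsub q hj₀)).1
    have htne : t j₀ ≠ t q := fun h => hj₀q (htinj _ _ h)
    have hbx : S11.gg f c (t i) (xhat i) (xc q) ≤ c * xc q :=
      S11.gg_le hc (hoptx i) (hxc0 q)
    have hby : S11.gg f c (1 - t i) (yhat i) (yc q) ≤ c * yc q :=
      S11.gg_le hc (hopty i) (hyc0 q)
    rcases lt_or_gt_of_ne htne with hlt | hgt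
    · -- t j₀ < t q : the y-good of q is saturated by the link to j₀
      have h1 : yhat q ≤ YY q := by
        have h2 := Finset.single_le_sum (f := fun j => yhat j) (fun j _ => hy0 j) hj₀
        have h3 : yhat q ≤ yhat j₀ := comoy j₀ q hlt.le
        rw [← hYYq q]; linarith
      have hycq : yc q = 0 := by rw [hycdef]; exact max_eq_right (by linarith)
      have hcx : c * xc q ≤ k := by
        rcases le_or_gt (xhat q - XX q) 0 with hle | hpos
        · have hxcq : xc q = 0 := by rw [hxcdef]; exact max_eq_right hle
          rw [hxcq, mul_zero]; exact hk.le
        · have hxcq : xc q = xhat q - XX q := by rw [hxcdef]; exact max_eq_left hpos.le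
          by_contra hcon
          push_neg at hcon
          have hAq : A ≠ q := fun hh => hq (hh ▸ hAF)
          have hAσ : A ∉ σ q := by
            intro hh
            have h3 : xhat A ≤ XX q := by
              have := Finset.single_le_sum (f := fun j => xhat j) (fun j _ => hx0 j) hh
              rw [← hXXq q]; exact this
            linarith [hxbar q]
          have hT'sub : insert A (σ q) ⊆ Fulls.erase q := by
            intro z hz
            rcases Finset.mem_insert.1 hz with rfl | hz
            · exact Finset.mem_erase.2 ⟨hAq, hAF⟩
            · exact hσsub q hz
          have hkey := hmaxq (insert A (σ q)) hT'sub
          rw [hHdef] at hkey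
          simp only [Finset.sum_insert hAσ, Finset.card_insert_of_notMem hAσ, hyA,
            zero_add, hXXq, hYYq, Nat.cast_add, Nat.cast_one] at hkey
          have hg1 : S11.gg f c (t q) (xhat q) (XX q) = c * XX q :=
            S11.gg_lin (by linarith)
          have hg2 : c * xhat q ≤ S11.gg f c (t q) (xhat q) (xhat A + XX q) := by
            have hmn : S11.gg f c (t q) (xhat q) (xhat q) ≤
                S11.gg f c (t q) (xhat q) (xhat A + XX q) :=
              S11.gg_mono hm hc (ht0 q) (hx0 q) (hx0 q) (by linarith [hxbar q, hXX0 q])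
            rw [S11.gg_lin le_rfl] at hmn
            exact hmn
          rw [hxcq] at hcon
          nlinarith [hkey, hg1, hg2, hcon]
      rw [hycq, S11.gg_zero (hy0 i)]
      linarith
    · -- t q < t j₀ : the x-good of q is saturated by the link to j₀
      have h1 : xhat q ≤ XX q := by
        have h2 := Finset.single_le_sum (f := fun j => xhat j) (fun j _ => hx0 j) hj₀
        have h3 : xhat q ≤ xhat j₀ := comox q j₀ hgt.le
        rw [← hXXq q]; linarith
      have hxcq : xc q = 0 := by rw [hxcdef]; exact max_eq_right (by linarith)
      have hcy : c * yc q ≤ k := by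
        rcases le_or_gt (yhat q - YY q) 0 with hle | hpos
        · have hycq : yc q = 0 := by rw [hycdef]; exact max_eq_right hle
          rw [hycq, mul_zero]; exact hk.le
        · have hycq : yc q = yhat q - YY q := by rw [hycdef]; exact max_eq_left hpos.le
          by_contra hcon
          push_neg at hcon
          have hBq : B ≠ q := fun hh => hq (hh ▸ hBF)
          have hBσ : B ∉ σ q := by
            intro hh
            have h3 : yhat B ≤ YY q := by
              have := Finset.single_le_sum (f := fun j => yhat j) (fun j _ => hy0 j) hh
              rw [← hYYq q]; exact this
            linarith [hybar q]
          have hT'sub : insert B (σ q) ⊆ Fulls.erase q := by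
            intro z hz
            rcases Finset.mem_insert.1 hz with rfl | hz
            · exact Finset.mem_erase.2 ⟨hBq, hBF⟩
            · exact hσsub q hz
          have hkey := hmaxq (insert B (σ q)) hT'sub
          rw [hHdef] at hkey
          simp only [Finset.sum_insert hBσ, Finset.card_insert_of_notMem hBσ, hxB,
            zero_add, hXXq, hYYq, Nat.cast_add, Nat.cast_one] at hkey
          have hg1 : S11.gg f c (1 - t q) (yhat q) (YY q) = c * YY q :=
            S11.gg_lin (by linarith)
          have hg2 : c * yhat q ≤ S11.gg f c (1 - t q) (yhat q) (yhat B + YY q) := by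
            have hmn : S11.gg f c (1 - t q) (yhat q) (yhat q) ≤
                S11.gg f c (1 - t q) (yhat q) (yhat B + YY q) :=
              S11.gg_mono hm hc (ht0' q) (hy0 q) (hy0 q) (by linarith [hybar q, hYY0 q])
            rw [S11.gg_lin le_rfl] at hmn
            exact hmn
          rw [hycq] at hcon
          nlinarith [hkey, hg1, hg2, hcon]
      rw [hxcq, S11.gg_zero (hx0 i)]
      linarith
  -- master per-term bound for deviations
  have hterm : ∀ (i : Fin n), i ∈ Fulls → ∀ j, j ≠ i →
      S11.gg f c (t i) (xhat i) (xc j) + S11.gg f c (1 - t i) (yhat i) (yc j) ≤ k := by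
    intro i hi j hji
    by_cases hj : j ∈ Fulls
    · rw [hxcfull j hj, hycfull j hj]
      have := hC1 i hi j hj (fun h => hji h.symm)
      rw [hGdef] at this
      exact this
    · exact hpkg j hj i
  -- no profitable deviation
  have hNE4 : ∀ (i : Fin n) (xi yi : ℝ) (gi : Fin n → Bool), 0 ≤ xi → 0 ≤ yi →
      gi i = false →
      payoff t f c k (Function.update xc i xi) (Function.update yc i yi)
          (updLinks g i gi) i ≤ payoff t f c k xc yc g i := by
    intro i xi yi gi hxi hyi hgii
    set L : Finset (Fin n) := Finset.univ.filter (fun j => gi j = true) with hLdef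
    have hiL : i ∉ L := by rw [hLdef]; simp [hgii]
    have hfL : Finset.univ.filter (fun j => updLinks g i gi i j = true) = L := by
      rw [hLdef]
      ext j
      simp [updLinks]
    have hsx : spill (Function.update xc i xi) (updLinks g i gi) i = ∑ j ∈ L, xc j := by
      rw [hspill, hfL]
      refine Finset.sum_congr rfl fun j hj => Function.update_of_ne ?_ _ _
      rintro rfl
      exact hiL hj
    have hsy : spill (Function.update yc i yi) (updLinks g i gi) i = ∑ j ∈ L, yc j := by
      rw [hspill, hfL]
      refine Finset.sum_congr rfl fun j hj => Function.update_of_ne ?_ _ _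
      rintro rfl
      exact hiL hj
    have hnl : nlinks (updLinks g i gi) i = L.card := by rw [hnlinks, hfL]
    have hLx0 : 0 ≤ ∑ j ∈ L, xc j := Finset.sum_nonneg fun j _ => hxc0 j
    have hLy0 : 0 ≤ ∑ j ∈ L, yc j := Finset.sum_nonneg fun j _ => hyc0 j
    have hb1 : payoff t f c k (Function.update xc i xi) (Function.update yc i yi)
          (updLinks g i gi) i
        ≤ (t i * f (xhat i) + (1 - t i) * f (yhat i) - c * (xhat i + yhat i))
          + (S11.gg f c (t i) (xhat i) (∑ j ∈ L, xc j)
             + S11.gg f c (1 - t i) (yhat i) (∑ j ∈ L, yc j) - L.card * k) := by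
      rw [payoff, hsx, hsy, hnl, Function.update_self, Function.update_self]
      have e1 := S11.gg_best hcc (ht0 i) (hx0 i) (hoptx i) hLx0 hxi
      have e2 := S11.gg_best hcc (ht0' i) (hy0 i) (hopty i) hLy0 hyi
      linarith
    have hcardk : (L.card : ℝ) * k = ∑ _j ∈ L, k := by
      rw [Finset.sum_const, nsmul_eq_mul]
    by_cases hi : i ∈ Fulls
    · -- full players have nothing to gain
      have hbx := S11.gg_sum_le hcc hc (ht0 i) (hx0 i) (hoptx i) L xc fun j _ => hxc0 j
      have hby := S11.gg_sum_le hcc hc (ht0' i) (hy0 i) (hopty i) L yc fun j _ => hyc0 j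
      have hsumterm : (∑ j ∈ L, S11.gg f c (t i) (xhat i) (xc j))
          + (∑ j ∈ L, S11.gg f c (1 - t i) (yhat i) (yc j)) - L.card * k ≤ 0 := by
        rw [hcardk, ← Finset.sum_add_distrib, ← Finset.sum_sub_distrib]
        apply Finset.sum_nonpos
        intro j hj
        have := hterm i hi j (fun h => hiL (h ▸ hj))
        linarith
      have hcur : payoff t f c k xc yc g i =
          t i * f (xhat i) + (1 - t i) * f (yhat i) - c * (xhat i + yhat i) := by
        rw [hpay i]
        have hXXi : XX i = 0 := by rw [hXXdef]; simp [hσfull i hi]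
        have hYYi : YY i = 0 := by rw [hYYdef]; simp [hσfull i hi]
        rw [hXXi, hYYi, S11.gg_zero (hx0 i), S11.gg_zero (hy0 i), hσfull i hi]
        simp
      rw [hcur]
      linarith
    · -- linked players: their chosen target set is optimal
      obtain ⟨hne, hH0, hmaxi⟩ := hσsrc i hi
      set LF : Finset (Fin n) := L ∩ Fulls with hLFdef
      set LS : Finset (Fin n) := L \ Fulls with hLSdef
      have hsplitx : ∑ j ∈ L, xc j = (∑ j ∈ LF, xc j) + ∑ j ∈ LS, xc j :=
        (Finset.sum_inter_add_sum_sdiff L Fulls _).symm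
      have hsplity : ∑ j ∈ L, yc j = (∑ j ∈ LF, yc j) + ∑ j ∈ LS, yc j :=
        (Finset.sum_inter_add_sum_sdiff L Fulls _).symm
      have hsplitk : (L.card : ℝ) * k = (∑ _j ∈ LF, k) + ∑ _j ∈ LS, k := by
        rw [hcardk]
        exact (Finset.sum_inter_add_sum_sdiff L Fulls _).symm
      have hLFx : ∑ j ∈ LF, xc j = ∑ j ∈ LF, xhat j :=
        Finset.sum_congr rfl fun j hj => hxcfull j (Finset.mem_inter.1 hj).2
      have hLFy : ∑ j ∈ LF, yc j = ∑ j ∈ LF, yhat j :=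
        Finset.sum_congr rfl fun j hj => hycfull j (Finset.mem_inter.1 hj).2
      have hLFx0 : 0 ≤ ∑ j ∈ LF, xc j := Finset.sum_nonneg fun j _ => hxc0 j
      have hLFy0 : 0 ≤ ∑ j ∈ LF, yc j := Finset.sum_nonneg fun j _ => hyc0 j
      have hLSx0 : 0 ≤ ∑ j ∈ LS, xc j := Finset.sum_nonneg fun j _ => hxc0 j
      have hLSy0 : 0 ≤ ∑ j ∈ LS, yc j := Finset.sum_nonneg fun j _ => hyc0 j
      have hsub1 : S11.gg f c (t i) (xhat i) (∑ j ∈ L, xc j)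
          ≤ S11.gg f c (t i) (xhat i) (∑ j ∈ LF, xc j)
            + ∑ j ∈ LS, S11.gg f c (t i) (xhat i) (xc j) := by
        rw [hsplitx]
        have h1 := S11.gg_subadd hcc hc (ht0 i) (hx0 i) (hoptx i) hLFx0 hLSx0
        have h2 := S11.gg_sum_le hcc hc (ht0 i) (hx0 i) (hoptx i) LS xc fun j _ => hxc0 j
        linarith
      have hsub2 : S11.gg f c (1 - t i) (yhat i) (∑ j ∈ L, yc j)
          ≤ S11.gg f c (1 - t i) (yhat i) (∑ j ∈ LF, yc j)
            + ∑ j ∈ LS, S11.gg f c (1 - t i) (yhat i) (yc j) := by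
        rw [hsplity]
        have h1 := S11.gg_subadd hcc hc (ht0' i) (hy0 i) (hopty i) hLFy0 hLSy0
        have h2 := S11.gg_sum_le hcc hc (ht0' i) (hy0 i) (hopty i) LS yc fun j _ => hyc0 j
        linarith
      have hLSle : (∑ j ∈ LS, S11.gg f c (t i) (xhat i) (xc j))
          + (∑ j ∈ LS, S11.gg f c (1 - t i) (yhat i) (yc j)) - (∑ _j ∈ LS, k) ≤ 0 := by
        rw [← Finset.sum_add_distrib, ← Finset.sum_sub_distrib]
        apply Finset.sum_nonpos
        intro j hj
        have hjnf : j ∉ Fulls := (Finset.mem_sdiff.1 hj).2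
        have := hpkg j hjnf i
        linarith
      have hLFsub : LF ⊆ Fulls.erase i := by
        intro z hz
        have hz' := Finset.mem_inter.1 hz
        exact Finset.mem_erase.2 ⟨fun h => hiL (h ▸ hz'.1), hz'.2⟩
      have hHLF := hmaxi LF hLFsub
      rw [hHdef] at hHLF
      simp only [hXXq, hYYq] at hHLF
      have hcur : payoff t f c k xc yc g i =
          (t i * f (xhat i) + (1 - t i) * f (yhat i) - c * (xhat i + yhat i))
          + (S11.gg f c (t i) (xhat i) (XX i) + S11.gg f c (1 - t i) (yhat i) (YY i)
             - (σ i).card * k) := hpay i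
      rw [hcur]
      rw [hLFx] at hsub1
      rw [hLFy] at hsub2
      have hsumLFk : (∑ _j ∈ LF, k) = (LF.card : ℝ) * k := by
        rw [Finset.sum_const, nsmul_eq_mul]
      linarith [hb1, hsub1, hsub2, hLSle, hHLF]
  -- assemble the equilibrium
  refine ⟨xc, yc, g, ⟨hxc0, hyc0, ?_, hNE4⟩, ?_⟩
  · intro i
    rw [hgdef]
    simp [hnotmemσ i]
  · intro i hcontrib j
    obtain ⟨m, hm'⟩ := hcontrib
    have hiσ : i ∈ σ m := by
      rw [hgdef] at hm'
      simpa using hm'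
    have hiF : i ∈ Fulls := hσFulls m hiσ
    rw [hgdef]
    simp [hσfull i hiF]
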